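/- Iterated ε-bypass corollary (Corollary: no new information): let N₀, N₁, …, N_m : NFA Σ σ be a sequence of automata such that for each i < m the language accepted by N_{i+1} equals the language accepted by sat N_i. Then for every word α accepted by N_m there exists a word α' accepted by N₀ with Red* α' α. -/

import Mathlib

/-- The four-letter alphabet Σ = {𝟎, 𝟏, 𝟎̄, 𝟏̄}. -/
inductive Sig : Type where
  | c0 : Sig  -- 𝟎
  | c1 : Sig  -- 𝟏
  | b0 : Sig  -- 𝟎̄
  | b1 : Sig  -- 𝟏̄
  deriving DecidableEq

open Sig

/-- A letter is unbarred if it is 𝟎 or 𝟏. -/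
def Unbarred : Sig → Prop
  | c0 => True
  | c1 => True
  | b0 => False
  | b1 => False

/-- A letter is barred if it is 𝟎̄ or 𝟏̄. -/
def Barred : Sig → Prop
  | c0 => False
  | c1 => False
  | b0 => True
  | b1 => True

/-- One-step reduction: delete an adjacent factor 𝟎̄𝟎 or 𝟏̄𝟏. -/
def Red (w w' : List Sig) : Prop :=
  ∃ u v : List Sig, (w = u ++ [b0, c0] ++ v ∨ w = u ++ [b1, c1] ++ v) ∧ w' = u ++ v

/-- Barring an unbarred letter: bar(𝟎)=𝟎̄, bar(𝟏)=𝟏̄ (identity on barred letters). -/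
def bar : Sig → Sig
  | c0 => b0
  | c1 => b1
  | b0 => b0
  | b1 => b1

/-- Bypass saturation: add an ε-edge bypassing every pair of consecutive edges
labeled 𝟎̄𝟎 or 𝟏̄𝟏; keep all letter transitions, start and accept sets. -/
def sat {σ : Type*} (N : NFA Sig σ) : εNFA Sig σ where
  step s := fun o => match o with
    | some a => N.step s a
    | none => { q'' | ∃ q, ∃ a ∈ ({c0, c1} : Set Sig), q ∈ N.step s (bar a) ∧ q'' ∈ N.step q a }
  start := N.start
  accept := N.accept

lemma red_append (a : Sig) {x y : List Sig} (h : Red x y) : Red (x ++ [a]) (y ++ [a]) := by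
  obtain ⟨u, v, hx, hy⟩ := h
  exact ⟨u, v ++ [a], by rcases hx with h | h <;> simp [h, hy], by simp [hy]⟩

lemma redStar_append (a : Sig) {x y : List Sig}
    (h : Relation.ReflTransGen Red x y) :
    Relation.ReflTransGen Red (x ++ [a]) (y ++ [a]) :=
  Relation.ReflTransGen.lift (· ++ [a]) (fun _ _ => red_append a) _ _ h

lemma sat_εClosure {σ : Type*} (N : NFA Sig σ) (S : Set σ) (w : List Sig) :
    ∀ q ∈ (sat N).εClosure (N.evalFrom S w),
      ∃ w', q ∈ N.evalFrom S w' ∧ Relation.ReflTransGen Red w' w := by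
  intro q hq
  induction hq with
  | base s hs => exact ⟨w, hs, Relation.ReflTransGen.refl⟩
  | step s t hst _ ih =>
    obtain ⟨w', hw', hred⟩ := ih
    obtain ⟨p, a, ha, hp, ht⟩ := hst
    refine ⟨w' ++ [bar a, a], ?_, ?_⟩
    · have : w' ++ [bar a, a] = (w' ++ [bar a]) ++ [a] := by simp
      rw [this, NFA.evalFrom_append, NFA.evalFrom_singleton, NFA.mem_stepSet]
      refine ⟨p, ?_, ht⟩
      rw [NFA.evalFrom_append, NFA.evalFrom_singleton, NFA.mem_stepSet]
      exact ⟨s, hw', hp⟩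
    · refine Relation.ReflTransGen.head ?_ hred
      refine ⟨w', [], ?_, by simp⟩
      rcases ha with rfl | ha
      · left; simp [bar]
      · right; simp at ha; subst ha; simp [bar]

lemma εClosure_mono {α σ : Type*} (M : εNFA α σ) {S T : Set σ} (h : S ⊆ T) :
    M.εClosure S ⊆ M.εClosure T := by
  intro q hq
  induction hq with
  | base s hs => exact εNFA.εClosure.base s (h hs)
  | step s t hst _ ih => exact εNFA.εClosure.step s t hst ih

lemma sat_evalFrom {σ : Type*} (N : NFA Sig σ) (S : Set σ) (α : List Sig) :
    ∀ q ∈ (sat N).evalFrom S α,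
      ∃ α', q ∈ N.evalFrom S α' ∧ Relation.ReflTransGen Red α' α := by
  induction α using List.reverseRecOn with
  | nil =>
    intro q hq
    exact sat_εClosure N S [] q hq
  | append_singleton w a ih =>
    intro q hq
    rw [εNFA.evalFrom_append_singleton, εNFA.mem_stepSet_iff] at hq
    obtain ⟨s, hs, hq⟩ := hq
    obtain ⟨w', hw', hred⟩ := ih s hs
    have hsub : (sat N).step s (some a) ⊆ N.evalFrom S (w' ++ [a]) := by
      intro t ht
      rw [NFA.evalFrom_append, NFA.evalFrom_singleton, NFA.mem_stepSet]
      exact ⟨s, hw', ht⟩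
    have hq' : q ∈ (sat N).εClosure (N.evalFrom S (w' ++ [a])) :=
      εClosure_mono (sat N) hsub hq
    obtain ⟨w'', hw'', hred''⟩ := sat_εClosure N S (w' ++ [a]) q hq'
    exact ⟨w'', hw'', hred''.trans (redStar_append a hred)⟩

lemma sat_accepts {σ : Type*} (N : NFA Sig σ) :
    ∀ α ∈ (sat N).accepts, ∃ α' ∈ N.accepts, Relation.ReflTransGen Red α' α := by
  intro α hα
  obtain ⟨q, hq, hev⟩ := hα
  obtain ⟨α', hα', hred⟩ := sat_evalFrom N N.start α q hev
  exact ⟨α', ⟨q, hq, hα'⟩, hred⟩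

/-- Iterated ε-bypass corollary (no new information): any word accepted by the
final automaton is a reduced version of a word accepted by the initial one. -/
theorem stmt5 {σ : Type*} (m : ℕ) (N : ℕ → NFA Sig σ)
    (h : ∀ i < m, (N (i + 1)).accepts = (sat (N i)).accepts) :
    ∀ α ∈ (N m).accepts, ∃ α' ∈ (N 0).accepts, Relation.ReflTransGen Red α' α := by
  induction m with
  | zero => exact fun α hα => ⟨α, hα, Relation.ReflTransGen.refl⟩
  | succ m ih =>
    intro α hα
    rw [h m (Nat.lt_succ_self m)] at hα
    obtain ⟨β, hβ, hred⟩ := sat_accepts (N m) α hα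
    obtain ⟨α', hα', hred'⟩ := ih (fun i hi => h i (Nat.lt_succ_of_lt hi)) β hβ
    exact ⟨α', hα', hred'.trans hred⟩
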